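/- Let W be a finite type, P : W → ℝ a probability mass function, L_0 : W → [0,1], f := Σ_w P(w) L_0(w) ∈ (0,1), a_0, a_1 > 0 with a_0 + a_1 = 1, λ_0 := a_1/f − a_0/(1−f), and Q(w) := a_1 P(w) L_0(w)/f + a_0 P(w)(1 − L_0(w))/(1−f). Then Σ_w Q(w) (L_0(w) − f)/(1 + λ_0 (L_0(w) − f)) = 0; that is, λ_0 solves the population version of the Lagrange multiplier equation. -/

import Mathlib

open Finset

/-- `λ₀ = a₁/f - a₀/(1-f)` solves the population version of the Lagrange
multiplier equation under the case-control sampling distribution `Q`. -/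
theorem lambda0_solves_population_equation {W : Type*} [Fintype W]
    (P : W → ℝ) (hP_nonneg : ∀ w, 0 ≤ P w) (hP_sum : ∑ w, P w = 1)
    (L₀ : W → ℝ) (hL₀ : ∀ w, 0 ≤ L₀ w ∧ L₀ w ≤ 1)
    (f : ℝ) (hf : f = ∑ w, P w * L₀ w) (hf0 : 0 < f) (hf1 : f < 1)
    (a₀ a₁ : ℝ) (ha₀ : 0 < a₀) (ha₁ : 0 < a₁) (ha : a₀ + a₁ = 1)
    (lam₀ : ℝ) (hlam : lam₀ = a₁ / f - a₀ / (1 - f))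
    (Q : W → ℝ)
    (hQ : ∀ w, Q w = a₁ * P w * L₀ w / f + a₀ * P w * (1 - L₀ w) / (1 - f)) :
    ∑ w, Q w * (L₀ w - f) / (1 + lam₀ * (L₀ w - f)) = 0 := by
  have ha' : a₀ = 1 - a₁ := by linarith
  subst ha'
  have hf1' : (0:ℝ) < 1 - f := by linarith
  have hterm : ∀ w, Q w * (L₀ w - f) / (1 + lam₀ * (L₀ w - f)) = P w * (L₀ w - f) := by
    intro w
    obtain ⟨hL0, hL1⟩ := hL₀ w
    have hDpos : 0 < (1 - a₁) * f * (1 - L₀ w) + a₁ * L₀ w * (1 - f) := by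
      rcases lt_or_eq_of_le hL1 with h | h
      · nlinarith [mul_pos (mul_pos ha₀ hf0) (by linarith : (0:ℝ) < 1 - L₀ w),
          mul_nonneg (mul_nonneg ha₁.le hL0) hf1'.le]
      · nlinarith [mul_pos ha₁ hf1']
    have ht : 0 < 1 + lam₀ * (L₀ w - f) := by
      have : 1 + lam₀ * (L₀ w - f)
          = ((1 - a₁) * f * (1 - L₀ w) + a₁ * L₀ w * (1 - f)) / (f * (1 - f)) := by
        rw [hlam]; field_simp; ring
      rw [this]
      positivity
    have hkey : Q w = P w * (1 + lam₀ * (L₀ w - f)) := by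
      rw [hQ, hlam]; field_simp; ring
    rw [hkey]
    field_simp
  simp only [hterm]
  have : ∑ w, P w * (L₀ w - f) = (∑ w, P w * L₀ w) - (∑ w, P w) * f := by
    rw [Finset.sum_mul]
    rw [← Finset.sum_sub_distrib]
    congr 1; ext w; ring
  rw [this, hP_sum, one_mul, ← hf, sub_self]
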